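/- Let A > 0 and x₁ ∈ (A/(A+1), 1). If x₀ ∈ (0,1) satisfies x₀ > 1 - x₁^A·(1-x₁)·((A+1)/A)^A, then x₀ > A/(A+1). In particular, since the maximum of x^A(1-x) over (0,1) is (A/(A+1))^A·(1/(A+1)), the bound 1 - x₁^A(1-x₁)((A+1)/A)^A is always at least A/(A+1). -/

import Mathlib

open Real Set

/-- If `x₁ ∈ (A/(A+1), 1)` and `x₀ > 1 - x₁^A * (1 - x₁) * ((A+1)/A)^A`, then
`x₀ > A/(A+1)`; moreover the bound `1 - x₁^A * (1-x₁) * ((A+1)/A)^A` is always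
at least `A/(A+1)`, since the maximum of `x^A (1-x)` on `(0,1)` is
`(A/(A+1))^A * (1/(A+1))`. -/
theorem lower_branch_above_alpha (A x₁ : ℝ) (hA : 0 < A)
    (hx₁ : x₁ ∈ Ioo (A / (A + 1)) 1) :
    (∀ x₀ ∈ Ioo (0:ℝ) 1,
        1 - x₁ ^ A * (1 - x₁) * ((A + 1) / A) ^ A < x₀ → A / (A + 1) < x₀) ∧
    A / (A + 1) ≤ 1 - x₁ ^ A * (1 - x₁) * ((A + 1) / A) ^ A := by
  have hA1 : (0:ℝ) < A + 1 := by linarith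
  have hx0 : 0 < x₁ := lt_trans (div_pos hA hA1) hx₁.1
  have hx1 : x₁ < 1 := hx₁.2
  have hw : A/(A+1) + 1/(A+1) = 1 := by field_simp
  have h := Real.geom_mean_le_arith_mean2_weighted
      (w₁ := A/(A+1)) (w₂ := 1/(A+1)) (p₁ := x₁*(A+1)/A) (p₂ := (1-x₁)*(A+1))
      (by positivity) (by positivity) (by positivity)
      (mul_nonneg (by linarith) hA1.le) hw
  have hrhs : A/(A+1)*(x₁*(A+1)/A) + 1/(A+1)*((1-x₁)*(A+1)) = 1 := by
    field_simp; ring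
  rw [hrhs] at h
  have hp2 : (0:ℝ) ≤ (1 - x₁) * (A + 1) := mul_nonneg (by linarith) hA1.le
  have h2 := Real.rpow_le_rpow
      (mul_nonneg (Real.rpow_nonneg (by positivity) _) (Real.rpow_nonneg hp2 _)) h hA1.le
  rw [Real.one_rpow, Real.mul_rpow (by positivity) (Real.rpow_nonneg hp2 _),
      ← Real.rpow_mul (by positivity), ← Real.rpow_mul hp2] at h2
  have e1 : A/(A+1)*(A+1) = A := by field_simp
  have e2 : 1/(A+1)*(A+1) = 1 := by field_simp
  rw [e1, e2, Real.rpow_one] at h2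
  have e3 : x₁*(A+1)/A = x₁ * ((A+1)/A) := by ring
  rw [e3, Real.mul_rpow hx0.le (by positivity)] at h2
  -- h2 : x₁^A * ((A+1)/A)^A * ((1-x₁)*(A+1)) ≤ 1
  have key : x₁ ^ A * (1 - x₁) * ((A + 1) / A) ^ A ≤ 1/(A+1) := by
    rw [le_div_iff₀ hA1]
    nlinarith [h2]
  have key2 : A / (A + 1) ≤ 1 - x₁ ^ A * (1 - x₁) * ((A + 1) / A) ^ A := by
    have : A/(A+1) = 1 - 1/(A+1) := by field_simp; ring
    rw [this]; linarith
  exact ⟨fun x₀ _ hgt => lt_of_le_of_lt key2 hgt, key2⟩
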